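/- arXiv:2402.02467 — 2 statements merged into one kernel-verified Lean document; each statement's English description precedes it below -/
import Mathlib

section
/- Let Λ > 0 and let c, d ≥ 0 satisfy c + d² > 0, and set w(s,t) = log( 2Λ / (cΛ² + s² + (t+dΛ)²) ) on the closed upper half-plane, and β = 2πd/√(d² + c). Then d · ∫_{∂ℝ²₊} e^{w} dl = β and c · ∫_{ℝ²₊} e^{2w} dx = 2π − β. -/
open MeasureTheory Filter Real Topology

noncomputable section

/-- Euclidean norm on `ℝ × ℝ`. -/
def nrm (p : ℝ × ℝ) : ℝ := Real.sqrt (p.1 ^ 2 + p.2 ^ 2)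

/-- Euclidean Laplacian `Δw = ∂²w/∂s² + ∂²w/∂t²` of `w : ℝ × ℝ → ℝ`. -/
def lap (w : ℝ × ℝ → ℝ) (p : ℝ × ℝ) : ℝ :=
  deriv (fun s => deriv (fun s' => w (s', p.2)) s) p.1 +
    deriv (fun t => deriv (fun t' => w (p.1, t')) t) p.2

/-- The open upper half-plane `ℝ²₊`. -/
def upperHalf : Set (ℝ × ℝ) := {p | 0 < p.2}

/-- The closed upper half-plane. -/
def closedUpperHalf : Set (ℝ × ℝ) := {p | 0 ≤ p.2}


lemma integrable_inv_const_add_sq {A : ℝ} (hA : 0 < A) :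
    Integrable (fun x : ℝ => (A + x ^ 2)⁻¹) := by
  have hm : 0 < min A 1 := lt_min hA one_pos
  refine (integrable_inv_one_add_sq.const_mul (min A 1)⁻¹).mono
    (Continuous.aestronglyMeasurable (Continuous.inv₀ (by continuity)
      (fun x => by positivity))) ?_
  filter_upwards with x
  have h1 : min A 1 * (1 + x ^ 2) ≤ A + x ^ 2 := by
    have := min_le_left A 1; have := min_le_right A 1; nlinarith [sq_nonneg x]
  have h2 : (A + x ^ 2)⁻¹ ≤ (min A 1 * (1 + x ^ 2))⁻¹ :=
    inv_anti₀ (by positivity) h1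
  rw [Real.norm_eq_abs, Real.norm_eq_abs, abs_of_nonneg (by positivity),
    abs_of_nonneg (by positivity)]
  calc (A + x ^ 2)⁻¹ ≤ (min A 1 * (1 + x ^ 2))⁻¹ := h2
  _ = (min A 1)⁻¹ * (1 + x ^ 2)⁻¹ := by rw [mul_inv]

lemma integral_inv_const_add_sq {A : ℝ} (hA : 0 < A) :
    ∫ x : ℝ, (A + x ^ 2)⁻¹ = Real.pi / Real.sqrt A := by
  set r := Real.sqrt A with hr
  have hr0 : 0 < r := Real.sqrt_pos.2 hA
  have hA' : A = r ^ 2 := (Real.sq_sqrt hA.le).symm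
  have hderiv : ∀ x : ℝ, HasDerivAt (fun x => r⁻¹ * Real.arctan (x * r⁻¹))
      ((A + x ^ 2)⁻¹) x := by
    intro x
    have h1 : HasDerivAt (fun x : ℝ => x * r⁻¹) r⁻¹ x := by
      simpa using (hasDerivAt_id x).mul_const r⁻¹
    have h2 := (Real.hasDerivAt_arctan (x * r⁻¹)).comp x h1
    have h3 := h2.const_mul r⁻¹
    refine h3.congr_deriv ?_
    symm
    have : 1 + (x * r⁻¹) ^ 2 = (A + x ^ 2) / (r * r) := by
      field_simp; rw [hA']
    rw [this]
    field_simp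
  have htop : Tendsto (fun x : ℝ => r⁻¹ * Real.arctan (x * r⁻¹)) atTop
      (𝓝 (r⁻¹ * (Real.pi / 2))) := by
    refine Tendsto.const_mul _ ?_
    refine (tendsto_nhds_of_tendsto_nhdsWithin Real.tendsto_arctan_atTop).comp ?_
    exact Tendsto.atTop_mul_const (by positivity) tendsto_id
  have hbot : Tendsto (fun x : ℝ => r⁻¹ * Real.arctan (x * r⁻¹)) atBot
      (𝓝 (r⁻¹ * (-(Real.pi / 2)))) := by
    refine Tendsto.const_mul _ ?_
    refine (tendsto_nhds_of_tendsto_nhdsWithin Real.tendsto_arctan_atBot).comp ?_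
    exact Tendsto.atBot_mul_const (by positivity) tendsto_id
  rw [integral_of_hasDerivAt_of_tendsto hderiv (integrable_inv_const_add_sq hA) hbot htop]
  field_simp
  ring



lemma integrable_inv_sq_const_add_sq {A : ℝ} (hA : 0 < A) :
    Integrable (fun x : ℝ => ((A + x ^ 2) ^ 2)⁻¹) := by
  refine ((integrable_inv_const_add_sq hA).const_mul A⁻¹).mono
    (Continuous.aestronglyMeasurable (Continuous.inv₀ (by continuity)
      (fun x => by positivity))) ?_
  filter_upwards with x
  rw [Real.norm_eq_abs, Real.norm_eq_abs, abs_of_nonneg (by positivity),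
    abs_of_nonneg (by positivity)]
  calc ((A + x ^ 2) ^ 2)⁻¹ ≤ (A * (A + x ^ 2))⁻¹ :=
        inv_anti₀ (by positivity) (by nlinarith [sq_nonneg x])
  _ = A⁻¹ * (A + x ^ 2)⁻¹ := by rw [mul_inv]

lemma tendsto_div_quad_atTop {A : ℝ} (hA : 0 < A) :
    Tendsto (fun x : ℝ => x / (2 * A * (A + x ^ 2))) atTop (𝓝 0) := by
  have h := (tendsto_inv_atTop_zero (𝕜 := ℝ)).const_mul (2*A)⁻¹
  rw [mul_zero] at h
  refine tendsto_of_tendsto_of_tendsto_of_le_of_le' tendsto_const_nhds h ?_ ?_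
  · filter_upwards [eventually_ge_atTop (0:ℝ)] with x hx
    positivity
  · filter_upwards [eventually_ge_atTop (1:ℝ)] with x hx
    have hx1 : (0:ℝ) < x := by linarith
    have hx2 : (0:ℝ) < x ^ 2 := by nlinarith
    have hxne : x ≠ 0 := by positivity
    have h2 : (2*A)⁻¹ * x⁻¹ = x / (2*A*x^2) := by
      field_simp
    rw [h2, div_le_div_iff₀ (by positivity) (by positivity)]
    nlinarith [mul_pos hx1 hA, mul_pos (mul_pos hx1 hA) hA]
lemma tendsto_div_quad_atBot {A : ℝ} (hA : 0 < A) :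
    Tendsto (fun x : ℝ => x / (2 * A * (A + x ^ 2))) atBot (𝓝 0) := by
  have h0 : Tendsto (fun x : ℝ => x⁻¹) atBot (𝓝 0) := by
    have := ((tendsto_inv_atTop_zero (𝕜 := ℝ)).comp tendsto_neg_atBot_atTop).neg
    rw [neg_zero] at this
    refine this.congr fun x => ?_
    simp only [Function.comp_apply, inv_neg, neg_neg]
  have h := h0.const_mul (2*A)⁻¹
  rw [mul_zero] at h
  refine tendsto_of_tendsto_of_tendsto_of_le_of_le' h tendsto_const_nhds ?_ ?_
  · filter_upwards [eventually_le_atBot (-1:ℝ)] with x hx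
    have hx1 : x < 0 := by linarith
    have hx2 : (0:ℝ) < x ^ 2 := by nlinarith
    have hxne : x ≠ 0 := ne_of_lt hx1
    have h2 : (2*A)⁻¹ * x⁻¹ = x / (2 * A * x^2) := by
      field_simp
    rw [h2, div_le_div_iff₀ (by positivity) (by positivity)]
    nlinarith [mul_pos hA hA, mul_neg_of_neg_of_pos hx1 (mul_pos hA hA)]
  · filter_upwards [eventually_le_atBot (0:ℝ)] with x hx
    exact div_nonpos_of_nonpos_of_nonneg hx (by positivity)

lemma integral_inv_sq_const_add_sq {A : ℝ} (hA : 0 < A) :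
    ∫ x : ℝ, ((A + x ^ 2) ^ 2)⁻¹ = Real.pi / (2 * A * Real.sqrt A) := by
  set r := Real.sqrt A with hr
  have hr0 : 0 < r := Real.sqrt_pos.2 hA
  have hA' : A = r ^ 2 := (Real.sq_sqrt hA.le).symm
  set F : ℝ → ℝ := fun x => x / (2 * A * (A + x ^ 2)) + (2 * A * r)⁻¹ * Real.arctan (x * r⁻¹)
    with hF
  have hderiv : ∀ x : ℝ, HasDerivAt F (((A + x ^ 2) ^ 2)⁻¹) x := by
    intro x
    have hQ : (0:ℝ) < A + x ^ 2 := by positivity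
    have h1 : HasDerivAt (fun x : ℝ => x / (2 * A * (A + x ^ 2)))
        ((1 * (2 * A * (A + x ^ 2)) - x * (2 * A * (2 * x))) / (2 * A * (A + x ^ 2)) ^ 2) x := by
      refine (hasDerivAt_id x).div ?_ (by positivity)
      have : HasDerivAt (fun x : ℝ => A + x ^ 2) (2 * x) x := by
        simpa using (hasDerivAt_pow 2 x).const_add A
      exact this.const_mul (2 * A)
    have h2 : HasDerivAt (fun x : ℝ => x * r⁻¹) r⁻¹ x := by
      simpa using (hasDerivAt_id x).mul_const r⁻¹
    have h3 := ((Real.hasDerivAt_arctan (x * r⁻¹)).comp x h2).const_mul ((2 * A * r)⁻¹)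
    have h4 := h1.add h3
    refine h4.congr_deriv ?_
    symm
    rw [hA']
    have h5 : 1 + (x * r⁻¹) ^ 2 = (r ^ 2 + x ^ 2) / (r * r) := by
      rw [eq_div_iff (by positivity)]
      field_simp
    rw [h5]
    field_simp
    ring
  have htop : Tendsto F atTop (𝓝 (0 + (2 * A * r)⁻¹ * (Real.pi / 2))) := by
    refine (tendsto_div_quad_atTop hA).add (Tendsto.const_mul _ ?_)
    refine (tendsto_nhds_of_tendsto_nhdsWithin Real.tendsto_arctan_atTop).comp ?_
    exact Tendsto.atTop_mul_const (by positivity) tendsto_id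
  have hbot : Tendsto F atBot (𝓝 (0 + (2 * A * r)⁻¹ * (-(Real.pi / 2)))) := by
    refine (tendsto_div_quad_atBot hA).add (Tendsto.const_mul _ ?_)
    refine (tendsto_nhds_of_tendsto_nhdsWithin Real.tendsto_arctan_atBot).comp ?_
    exact Tendsto.atBot_mul_const (by positivity) tendsto_id
  rw [integral_of_hasDerivAt_of_tendsto hderiv (integrable_inv_sq_const_add_sq hA) hbot htop]
  field_simp
  ring


section L3
variable {B e : ℝ}

lemma L3_hasDeriv (hB : 0 < B) (t : ℝ) :
    HasDerivAt (fun t : ℝ => (t + e) / (B * Real.sqrt (B + (t + e) ^ 2)))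
      (((B + (t + e) ^ 2) * Real.sqrt (B + (t + e) ^ 2))⁻¹) t := by
  have hQ : (0:ℝ) < B + (t + e) ^ 2 := by positivity
  have hσ : (0:ℝ) < Real.sqrt (B + (t + e) ^ 2) := Real.sqrt_pos.2 hQ
  have hq : HasDerivAt (fun t : ℝ => B + (t + e) ^ 2) (2 * (t + e)) t := by
    have h := ((hasDerivAt_id t).add_const e).pow 2
    simpa [mul_comm] using h.const_add B
  have hs : HasDerivAt (fun t : ℝ => Real.sqrt (B + (t + e) ^ 2))
      (1 / (2 * Real.sqrt (B + (t + e) ^ 2)) * (2 * (t + e))) t :=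
    (Real.hasDerivAt_sqrt hQ.ne').comp t hq
  have hd : HasDerivAt (fun t : ℝ => B * Real.sqrt (B + (t + e) ^ 2))
      (B * (1 / (2 * Real.sqrt (B + (t + e) ^ 2)) * (2 * (t + e)))) t := hs.const_mul B
  have hu : HasDerivAt (fun t : ℝ => t + e) 1 t := (hasDerivAt_id t).add_const e
  have h := hu.div hd (by positivity)
  refine h.congr_deriv ?_
  symm
  set σ := Real.sqrt (B + (t + e) ^ 2) with hσdef
  have hQs : B + (t + e) ^ 2 = σ ^ 2 := (Real.sq_sqrt hQ.le).symm
  rw [hQs]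
  field_simp
  linear_combination hQs

lemma L3_tendsto (hB : 0 < B) :
    Tendsto (fun t : ℝ => (t + e) / (B * Real.sqrt (B + (t + e) ^ 2))) atTop (𝓝 B⁻¹) := by
  have hQtop : Tendsto (fun t : ℝ => B + (t + e) ^ 2) atTop atTop := by
    refine tendsto_atTop_add_const_left _ B ?_
    exact (tendsto_pow_atTop (two_ne_zero)).comp (tendsto_atTop_add_const_right _ e tendsto_id)
  have h0 : Tendsto (fun t : ℝ => 1 - B / (B + (t + e) ^ 2)) atTop (𝓝 1) := by
    have := (hQtop.inv_tendsto_atTop).const_mul B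
    rw [mul_zero] at this
    have h := tendsto_const_nhds.sub (f := fun _ : ℝ => (1:ℝ)) this
    rw [sub_zero] at h
    refine h.congr fun t => ?_
    simp [div_eq_mul_inv]
  have h1 : Tendsto (fun t : ℝ => Real.sqrt (1 - B / (B + (t + e) ^ 2))) atTop (𝓝 1) := by
    have := (Real.continuous_sqrt.continuousAt (x := (1:ℝ))).tendsto.comp h0
    rwa [Real.sqrt_one] at this
  have h2 : Tendsto (fun t : ℝ => (t + e) / Real.sqrt (B + (t + e) ^ 2)) atTop (𝓝 1) := by
    refine Tendsto.congr' ?_ h1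
    filter_upwards [eventually_ge_atTop (-e)] with t ht
    have hu : (0:ℝ) ≤ t + e := by linarith
    have hQ : (0:ℝ) < B + (t + e) ^ 2 := by positivity
    have : 1 - B / (B + (t + e) ^ 2) = (t + e) ^ 2 / (B + (t + e) ^ 2) := by
      field_simp
      ring
    rw [this, Real.sqrt_div (sq_nonneg _), Real.sqrt_sq hu]
  have h3 := h2.const_mul B⁻¹
  rw [mul_one] at h3
  refine h3.congr fun t => ?_
  have hσ : (0:ℝ) < Real.sqrt (B + (t + e) ^ 2) := Real.sqrt_pos.2 (by positivity)
  field_simp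

lemma L3_integrableOn (hB : 0 < B) :
    IntegrableOn (fun t : ℝ => ((B + (t + e) ^ 2) * Real.sqrt (B + (t + e) ^ 2))⁻¹) (Set.Ioi 0) := by
  refine integrableOn_Ioi_deriv_of_nonneg' (fun x _ => L3_hasDeriv hB x) ?_ (L3_tendsto hB)
  intro x _
  positivity

lemma L3_integral (hB : 0 < B) :
    ∫ t in Set.Ioi (0:ℝ), ((B + (t + e) ^ 2) * Real.sqrt (B + (t + e) ^ 2))⁻¹
      = B⁻¹ - e / (B * Real.sqrt (B + e ^ 2)) := by
  have h := integral_Ioi_of_hasDerivAt_of_nonneg' (fun x (_ : x ∈ Set.Ici (0:ℝ)) => L3_hasDeriv hB x)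
    (fun x _ => by positivity) (L3_tendsto (e := e) hB)
  simpa using h
end L3


/-- For the bubble `w(s,t) = log( 2Λ / (cΛ² + s² + (t+dΛ)²) )` on the closed upper half-plane
and `β = 2πd/√(d²+c)`, one has `d ∫_{∂ℝ²₊} e^{w} dl = β` and `c ∫_{ℝ²₊} e^{2w} dx = 2π − β`. -/
theorem bubble_curvature_quantization (Λ c d : ℝ) (hΛ : 0 < Λ) (hc : 0 ≤ c) (hd : 0 ≤ d)
    (hcd : 0 < c + d ^ 2) (w : ℝ × ℝ → ℝ)
    (hw : ∀ p : ℝ × ℝ,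
      w p = Real.log (2 * Λ / (c * Λ ^ 2 + p.1 ^ 2 + (p.2 + d * Λ) ^ 2)))
    (β : ℝ) (hβ : β = 2 * Real.pi * d / Real.sqrt (d ^ 2 + c)) :
    d * (∫ s : ℝ, Real.exp (w (s, 0))) = β ∧
    c * (∫ p in upperHalf, Real.exp (2 * w p)) = 2 * Real.pi - β := by
  have hΛ2 : (0:ℝ) < Λ ^ 2 := by positivity
  have hA1 : (0:ℝ) < (c + d ^ 2) * Λ ^ 2 := mul_pos hcd hΛ2
  have hsqcd : (0:ℝ) < Real.sqrt (c + d ^ 2) := Real.sqrt_pos.2 hcd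
  have hsqΛ : Real.sqrt ((c + d ^ 2) * Λ ^ 2) = Real.sqrt (c + d ^ 2) * Λ := by
    rw [Real.sqrt_mul hcd.le, Real.sqrt_sq hΛ.le]
  have hdc : Real.sqrt (d ^ 2 + c) = Real.sqrt (c + d ^ 2) := by rw [add_comm]
  constructor
  · -- boundary integral
    have hb : ∀ s : ℝ, Real.exp (w (s, 0)) = 2 * Λ * ((c + d ^ 2) * Λ ^ 2 + s ^ 2)⁻¹ := by
      intro s
      rw [hw (s, 0)]
      have hden : (0:ℝ) < c * Λ ^ 2 + (s, (0:ℝ)).1 ^ 2 + ((s, (0:ℝ)).2 + d * Λ) ^ 2 := by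
        simp only
        nlinarith [sq_nonneg s, mul_pos hcd hΛ2]
      rw [Real.exp_log (by positivity)]
      simp only
      rw [div_eq_mul_inv]
      congr 1
      ring
    simp_rw [hb]
    rw [MeasureTheory.integral_const_mul, integral_inv_const_add_sq hA1, hβ, hdc, hsqΛ]
    field_simp
  · -- interior integral
    rcases hc.eq_or_lt with hc0 | hc0
    · -- c = 0
      subst hc0
      have hd0 : 0 < d := by
        rcases hd.eq_or_lt with h | h
        · exfalso; rw [← h] at hcd; simp at hcd
        · exact h
      rw [hβ]
      simp [Real.sqrt_sq hd0.le, hd0.ne']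
    · -- c > 0
      set B := c * Λ ^ 2 with hBdef
      set e := d * Λ with hedef
      have hB : 0 < B := by positivity
      set f : ℝ × ℝ → ℝ := fun p => (2 * Λ) ^ 2 * (((B + (p.2 + e) ^ 2) + p.1 ^ 2) ^ 2)⁻¹
        with hfdef
      have hbe : B + e ^ 2 = (c + d ^ 2) * Λ ^ 2 := by rw [hBdef, hedef]; ring
      have hstepA : ∀ p : ℝ × ℝ, Real.exp (2 * w p) = f p := by
        intro p
        rw [hw p]
        have hden : (0:ℝ) < c * Λ ^ 2 + p.1 ^ 2 + (p.2 + d * Λ) ^ 2 := by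
          nlinarith [sq_nonneg p.1, sq_nonneg (p.2 + d * Λ)]
        rw [two_mul, Real.exp_add, Real.exp_log (by positivity), hfdef]
        simp only
        rw [div_mul_div_comm, ← pow_two, ← pow_two, div_eq_mul_inv]
        congr 2
        rw [hBdef, hedef]
        ring
      have hC : ∀ t : ℝ, (0:ℝ) < B + (t + e) ^ 2 := fun t => by positivity
      have hinner : ∀ t : ℝ, ∫ s : ℝ, f (s, t)
          = 2 * Real.pi * Λ ^ 2 * ((B + (t + e) ^ 2) * Real.sqrt (B + (t + e) ^ 2))⁻¹ := by
        intro t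
        have h1 : (fun s : ℝ => f (s, t))
            = fun s : ℝ => (2 * Λ) ^ 2 * (((B + (t + e) ^ 2) + s ^ 2) ^ 2)⁻¹ := rfl
        rw [h1, MeasureTheory.integral_const_mul, integral_inv_sq_const_add_sq (hC t)]
        have hs := Real.sqrt_pos.2 (hC t)
        field_simp
      have hcont : Continuous f := by
        apply Continuous.mul continuous_const
        apply Continuous.inv₀
        · continuity
        · intro p
          have := hC p.2
          positivity
      have hInt : Integrable f ((volume : Measure ℝ).prod
          ((volume : Measure ℝ).restrict (Set.Ioi (0:ℝ)))) := by
        rw [MeasureTheory.integrable_prod_iff' hcont.aestronglyMeasurable]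
        constructor
        · refine Filter.Eventually.of_forall fun t => ?_
          exact (integrable_inv_sq_const_add_sq (hC t)).const_mul _
        · have hnorm : (fun t : ℝ => ∫ s : ℝ, ‖f (s, t)‖)
              = fun t : ℝ => 2 * Real.pi * Λ ^ 2
                  * ((B + (t + e) ^ 2) * Real.sqrt (B + (t + e) ^ 2))⁻¹ := by
            funext t
            rw [← hinner t]
            congr 1
            funext s
            rw [Real.norm_eq_abs, abs_of_nonneg]
            have := hC t
            positivity
          rw [hnorm]
          exact (L3_integrableOn hB).const_mul _
      have hUH : upperHalf = (Set.univ : Set ℝ) ×ˢ Set.Ioi (0:ℝ) := by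
        ext p
        simp [upperHalf, Set.mem_prod]
      calc c * (∫ p in upperHalf, Real.exp (2 * w p)) = c * (∫ p in upperHalf, f p) := by
            simp_rw [hstepA]
      _ = c * ∫ p, f p ∂((volume : Measure ℝ).prod
            ((volume : Measure ℝ).restrict (Set.Ioi (0:ℝ)))) := by
            rw [hUH, MeasureTheory.Measure.volume_eq_prod, ← Measure.prod_restrict,
              Measure.restrict_univ]
      _ = c * ∫ t in Set.Ioi (0:ℝ), ∫ s : ℝ, f (s, t) := by
            rw [MeasureTheory.integral_prod_symm f hInt]
      _ = c * (2 * Real.pi * Λ ^ 2 * (B⁻¹ - e / (B * Real.sqrt (B + e ^ 2)))) := by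
            congr 1
            simp_rw [hinner]
            rw [MeasureTheory.integral_const_mul, L3_integral hB]
      _ = 2 * Real.pi - β := by
            rw [hβ, hdc, hbe, hsqΛ, hBdef, hedef]
            have hcne : c ≠ 0 := hc0.ne'
            field_simp
end
end

section
/- Let a ∈ ℝ and let w : B₁⁺ → ℝ be Lebesgue measurable such that e^{2|w|} ∈ L^p(B₁⁺) for every p ∈ [1,∞) and ∫_{B₁⁺} |x|^{2−2a} e^{2w(x)} dx < ∞. Then a ≤ 2. -/
open MeasureTheory Filter

noncomputable section

/-- The open upper half-ball `B_r⁺` of radius `r` centered at `0`. -/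
def ballPlus (r : ℝ) : Set (ℝ × ℝ) := {p | nrm p < r ∧ 0 < p.2}

/-- The closed upper half-ball `B̄_r⁺` of radius `r` centered at `0`. -/
def cballPlus (r : ℝ) : Set (ℝ × ℝ) := {p | nrm p ≤ r ∧ 0 ≤ p.2}

/-- Squared Euclidean gradient `|∇u|² = (∂u/∂s)² + (∂u/∂t)²`. -/
def gradSq (u : ℝ × ℝ → ℝ) (p : ℝ × ℝ) : ℝ :=
  (deriv (fun s => u (s, p.2)) p.1) ^ 2 + (deriv (fun t => u (p.1, t)) p.2) ^ 2

/-- Young-type inequality: `u^θ v^{1-θ} ≤ u + v` for nonnegative `u, v` and `θ ∈ [0,1]`. -/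
lemma young_aux {u v θ : ℝ} (hu : 0 ≤ u) (hv : 0 ≤ v) (hθ0 : 0 ≤ θ) (hθ1 : θ ≤ 1) :
    u ^ θ * v ^ (1 - θ) ≤ u + v := by
  have h1θ : 0 ≤ 1 - θ := by linarith
  rcases le_total u v with h | h
  · calc u ^ θ * v ^ (1 - θ) ≤ v ^ θ * v ^ (1 - θ) :=
          mul_le_mul_of_nonneg_right (Real.rpow_le_rpow hu h hθ0) (Real.rpow_nonneg hv _)
    _ = v ^ (θ + (1 - θ)) := (Real.rpow_add' hv (by norm_num)).symm
    _ = v := by rw [show θ + (1 - θ) = 1 by ring, Real.rpow_one]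
    _ ≤ u + v := le_add_of_nonneg_left hu
  · calc u ^ θ * v ^ (1 - θ) ≤ u ^ θ * u ^ (1 - θ) :=
          mul_le_mul_of_nonneg_left (Real.rpow_le_rpow hv h h1θ) (Real.rpow_nonneg hu _)
    _ = u ^ (θ + (1 - θ)) := (Real.rpow_add' hu (by norm_num)).symm
    _ = u := by rw [show θ + (1 - θ) = 1 by ring, Real.rpow_one]
    _ ≤ u + v := le_add_of_nonneg_right hv

lemma nrm_continuous : Continuous nrm := by
  unfold nrm
  exact Real.continuous_sqrt.comp (((continuous_fst.pow 2)).add ((continuous_snd.pow 2)))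

lemma ballPlus_open : IsOpen (ballPlus 1) := by
  have : ballPlus 1 = {p : ℝ × ℝ | nrm p < 1} ∩ {p : ℝ × ℝ | 0 < p.2} := rfl
  rw [this]
  exact (isOpen_lt nrm_continuous continuous_const).inter
    (isOpen_lt continuous_const continuous_snd)

/-- The triangle `{0 < s < 1/2, 0 < t < s}`. -/
def tri : Set (ℝ × ℝ) := {p | (0 < p.1 ∧ p.1 < 1/2) ∧ 0 < p.2 ∧ p.2 < p.1}

lemma tri_measurable : MeasurableSet tri := by
  have : tri = ({p : ℝ × ℝ | 0 < p.1} ∩ {p : ℝ × ℝ | p.1 < 1/2}) ∩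
      ({p : ℝ × ℝ | 0 < p.2} ∩ {p : ℝ × ℝ | p.2 < p.1}) := rfl
  rw [this]
  exact (((measurableSet_lt measurable_const measurable_fst).inter
    (measurableSet_lt measurable_fst measurable_const))).inter
    ((measurableSet_lt measurable_const measurable_snd).inter
    (measurableSet_lt measurable_snd measurable_fst))

lemma tri_subset : tri ⊆ ballPlus 1 := by
  rintro ⟨s, t⟩ ⟨⟨hs0, hshalf⟩, ht0, hts⟩
  refine ⟨?_, ht0⟩
  show Real.sqrt (s ^ 2 + t ^ 2) < 1
  rw [Real.sqrt_lt' one_pos]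
  nlinarith

/-- The key divergence: `∫_{(0,1/2)} (2s)⁻¹ ds = ∞` as a lower Lebesgue integral. -/
lemma lintegral_inv_diverges :
    ∫⁻ s in Set.Ioo (0:ℝ) (1/2), ENNReal.ofReal ((2*s)⁻¹) ∂volume = ⊤ := by
  by_contra hfin
  have hmeas : Measurable fun s : ℝ => (2*s)⁻¹ :=
    (measurable_const.mul measurable_id).inv
  have hintOn : IntegrableOn (fun s : ℝ => (2*s)⁻¹) (Set.Ioo (0:ℝ) (1/2)) := by
    refine ⟨hmeas.aestronglyMeasurable, ?_⟩
    rw [hasFiniteIntegral_iff_norm]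
    have : ∫⁻ s in Set.Ioo (0:ℝ) (1/2), ENNReal.ofReal ‖(2*s)⁻¹‖ ∂volume
        = ∫⁻ s in Set.Ioo (0:ℝ) (1/2), ENNReal.ofReal ((2*s)⁻¹) ∂volume := by
      refine setLIntegral_congr_fun measurableSet_Ioo (fun s hs => ?_)
      rw [Real.norm_of_nonneg (inv_nonneg.2 (by linarith [hs.1]))]
    rw [this]
    exact lt_top_iff_ne_top.2 hfin
  have hinv : IntegrableOn (fun s : ℝ => s⁻¹) (Set.Ioo (0:ℝ) (1/2)) := by
    have h2 := hintOn.const_mul (2:ℝ)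
    have : (fun s : ℝ => (2:ℝ) * (2*s)⁻¹) = fun s : ℝ => s⁻¹ := by
      funext s; rw [mul_inv]; ring
    rwa [this] at h2
  have hIoc : IntegrableOn (fun s : ℝ => s⁻¹) (Set.Ioc (0:ℝ) (1/2)) :=
    (integrableOn_Ioc_iff_integrableOn_Ioo (by simp)).2 hinv
  have hII : IntervalIntegrable (fun s : ℝ => s⁻¹) volume 0 (1/2) :=
    (intervalIntegrable_iff_integrableOn_Ioc_of_le (by norm_num)).2 hIoc
  rcases intervalIntegrable_inv_iff.1 hII with h | h
  · norm_num at h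
  · exact h (Set.left_mem_uIcc)

/-- If `e^{2|w|} ∈ L^p(B₁⁺)` for every `p ∈ [1,∞)` and `∫_{B₁⁺} |x|^{2−2a} e^{2w} dx < ∞`,
then `a ≤ 2`. -/
theorem exponent_le_two (a : ℝ) (w : ℝ × ℝ → ℝ) (hmeas : Measurable w)
    (hLp : ∀ p : ℝ, 1 ≤ p →
      IntegrableOn (fun x => Real.exp (2 * p * |w x|)) (ballPlus 1))
    (hint : IntegrableOn (fun x => nrm x ^ (2 - 2 * a) * Real.exp (2 * w x)) (ballPlus 1)) :
    a ≤ 2 := by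
  by_contra hcon
  push_neg at hcon
  have ha1 : (0:ℝ) < a - 1 := by linarith
  have ha2 : (0:ℝ) < a - 2 := by linarith
  set θ : ℝ := 1 / (a - 1) with hθdef
  have hθ0 : 0 < θ := by positivity
  have hθ1 : θ ≤ 1 := by
    rw [hθdef, div_le_one ha1]; linarith
  set p₀ : ℝ := max 1 (1 / (a - 2)) with hp₀def
  have hp₀ : 1 ≤ p₀ := le_max_left _ _
  have hp₀' : 1 / (a - 2) ≤ p₀ := le_max_right _ _
  have hBmeas : MeasurableSet (ballPlus 1) := ballPlus_open.measurableSet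
  -- the dominating integrable function
  have hF : IntegrableOn
      (fun x => nrm x ^ (2 - 2 * a) * Real.exp (2 * w x) + Real.exp (2 * p₀ * |w x|))
      (ballPlus 1) := hint.add (hLp p₀ hp₀)
  -- nrm ^ (-2) is integrable on ballPlus 1
  have hg : IntegrableOn (fun x => nrm x ^ (-2 : ℝ)) (ballPlus 1) := by
    refine hF.mono' ((nrm_continuous.measurable.pow_const (-2 : ℝ)).aestronglyMeasurable) ?_
    refine (ae_restrict_iff' hBmeas).2 (ae_of_all _ fun x hx => ?_)
    obtain ⟨hx1, hx2⟩ := hx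
    have hr0 : 0 < nrm x := Real.sqrt_pos.2 (by nlinarith [sq_nonneg x.1])
    have hu0 : 0 ≤ nrm x ^ (2 - 2*a) * Real.exp (2 * w x) :=
      mul_nonneg (Real.rpow_nonneg hr0.le _) (Real.exp_nonneg _)
    have key : nrm x ^ (-2 : ℝ) =
        (nrm x ^ (2 - 2*a) * Real.exp (2 * w x)) ^ θ *
          (Real.exp (-(2 * w x) / (a - 2))) ^ (1 - θ) := by
      rw [Real.mul_rpow (Real.rpow_nonneg hr0.le _) (Real.exp_nonneg _),
        ← Real.rpow_mul hr0.le, ← Real.exp_mul, ← Real.exp_mul, mul_assoc, ← Real.exp_add]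
      have e1 : (2 - 2*a) * θ = -2 := by
        rw [hθdef]; field_simp; ring
      have e2 : 2 * w x * θ + -(2 * w x) / (a - 2) * (1 - θ) = 0 := by
        rw [hθdef]; field_simp; ring
      rw [e1, e2, Real.exp_zero, mul_one]
    rw [Real.norm_of_nonneg (Real.rpow_nonneg hr0.le _), key]
    refine le_trans (young_aux hu0 (Real.exp_nonneg _) hθ0.le hθ1) ?_
    refine add_le_add_right (Real.exp_le_exp.2 ?_) _
    have h1 : 1 ≤ p₀ * (a - 2) := (div_le_iff₀ ha2).1 hp₀'
    have h2 : -(w x) ≤ |w x| := neg_le_abs _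
    have h3 : 0 ≤ |w x| := abs_nonneg _
    rw [div_le_iff₀ ha2]
    nlinarith [mul_nonneg (sub_nonneg.2 h1) h3]
  -- restrict to the triangle and derive a contradiction
  have hgT : IntegrableOn (fun x => nrm x ^ (-2 : ℝ)) tri := hg.mono_set tri_subset
  have h1 : IntegrableOn (fun p : ℝ × ℝ => (2 * p.1 ^ 2)⁻¹) tri := by
    refine hgT.mono' (((measurable_fst.pow_const 2).const_mul 2).inv.aestronglyMeasurable) ?_
    refine (ae_restrict_iff' tri_measurable).2 (ae_of_all _ fun p hp => ?_)
    obtain ⟨⟨hs0, hs2⟩, ht0, hts⟩ := hp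
    have hpos : (0:ℝ) < 2 * p.1 ^ 2 := by positivity
    rw [Real.norm_of_nonneg (le_of_lt (inv_pos.2 hpos))]
    have hnrm0 : 0 ≤ nrm p := Real.sqrt_nonneg _
    have hnn : nrm p ^ (-2 : ℝ) = (p.1 ^ 2 + p.2 ^ 2)⁻¹ := by
      rw [Real.rpow_neg hnrm0, show ((2:ℝ)) = ((2:ℕ):ℝ) by norm_num,
        Real.rpow_natCast]
      congr 1
      exact Real.sq_sqrt (by positivity)
    rw [hnn]
    exact inv_anti₀ (by positivity) (by nlinarith)
  have h2 : ∫⁻ p in tri, ENNReal.ofReal ((2 * p.1 ^ 2)⁻¹) ∂volume < ⊤ := h1.lintegral_lt_top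
  have hf2m : Measurable fun p : ℝ × ℝ => ENNReal.ofReal ((2 * p.1 ^ 2)⁻¹) :=
    ENNReal.measurable_ofReal.comp ((measurable_fst.pow_const 2).const_mul 2).inv
  have key : (∫⁻ p in tri, ENNReal.ofReal ((2 * p.1 ^ 2)⁻¹) ∂volume)
      = ∫⁻ s in Set.Ioo (0:ℝ) (1/2), ENNReal.ofReal ((2*s)⁻¹) ∂volume := by
    rw [← lintegral_indicator tri_measurable, Measure.volume_eq_prod,
      lintegral_prod _ ((hf2m.indicator tri_measurable).aemeasurable),
      ← lintegral_indicator measurableSet_Ioo]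
    refine lintegral_congr fun s => ?_
    by_cases hs : s ∈ Set.Ioo (0:ℝ) (1/2)
    · have hinner : ∀ t : ℝ,
          tri.indicator (fun p : ℝ × ℝ => ENNReal.ofReal ((2 * p.1 ^ 2)⁻¹)) (s, t)
          = (Set.Ioo (0:ℝ) s).indicator (fun _ => ENNReal.ofReal ((2 * s ^ 2)⁻¹)) t := by
        intro t
        by_cases ht : t ∈ Set.Ioo (0:ℝ) s
        · rw [Set.indicator_of_mem ht,
            Set.indicator_of_mem (show (s, t) ∈ tri from ⟨⟨hs.1, hs.2⟩, ht.1, ht.2⟩)]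
        · rw [Set.indicator_of_notMem ht, Set.indicator_of_notMem
            (by intro hmem; exact ht ⟨hmem.2.1, hmem.2.2⟩)]
      rw [Set.indicator_of_mem hs]
      calc ∫⁻ t, tri.indicator (fun p : ℝ × ℝ => ENNReal.ofReal ((2 * p.1 ^ 2)⁻¹)) (s, t) ∂volume
          = ∫⁻ t, (Set.Ioo (0:ℝ) s).indicator (fun _ => ENNReal.ofReal ((2 * s ^ 2)⁻¹)) t ∂volume :=
            lintegral_congr fun t => hinner t
        _ = ∫⁻ _ in Set.Ioo (0:ℝ) s, ENNReal.ofReal ((2 * s ^ 2)⁻¹) ∂volume :=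
            lintegral_indicator measurableSet_Ioo _
        _ = ENNReal.ofReal ((2 * s ^ 2)⁻¹) * volume (Set.Ioo (0:ℝ) s) := setLIntegral_const _ _
        _ = ENNReal.ofReal ((2 * s ^ 2)⁻¹) * ENNReal.ofReal s := by rw [Real.volume_Ioo, sub_zero]
        _ = ENNReal.ofReal ((2 * s ^ 2)⁻¹ * s) :=
            (ENNReal.ofReal_mul (by positivity)).symm
        _ = ENNReal.ofReal ((2*s)⁻¹) := by
            congr 1
            have hs0 : s ≠ 0 := ne_of_gt hs.1
            field_simp
    · rw [Set.indicator_of_notMem hs]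
      have hzero : ∀ t : ℝ,
          tri.indicator (fun p : ℝ × ℝ => ENNReal.ofReal ((2 * p.1 ^ 2)⁻¹)) (s, t) = 0 := by
        intro t
        exact Set.indicator_of_notMem (by intro hmem; exact hs ⟨hmem.1.1, hmem.1.2⟩) _
      exact (lintegral_congr hzero).trans lintegral_zero
  rw [key, lintegral_inv_diverges] at h2
  exact absurd h2 (lt_irrefl _)
end
end
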